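/- For i.i.d. zero-mean Gumbel random variables and a potential θ over X = X₁ × ⋯ × Xₙ with each Xᵢ finite, the log-partition function satisfies the alternating expectation-maximization identity: log Z = E_{γ₁} max_{x₁} E_{γ₂} max_{x₂} ⋯ E_{γₙ} max_{xₙ} { θ(x₁,…,xₙ) + Σᵢ γᵢ(xᵢ) }, where for each i the collection {γᵢ(xᵢ)}_{xᵢ∈Xᵢ} consists of i.i.d. zero-mean Gumbel variables. -/

import Mathlib

open MeasureTheory Real

/-- Density of the zero-mean Gumbel distribution, whose CDF is `exp (-exp (-(t + c)))`. -/
noncomputable def gumbelPDF (t : ℝ) : ℝ :=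
  Real.exp (-(t + Real.eulerMascheroniConstant)) *
    Real.exp (-Real.exp (-(t + Real.eulerMascheroniConstant)))

/-- The zero-mean Gumbel measure on `ℝ`. -/
noncomputable def gumbel : Measure ℝ :=
  MeasureTheory.volume.withDensity fun t => ENNReal.ofReal (gumbelPDF t)

open Set Filter Topology Asymptotics
open scoped ENNReal NNReal

local notation "γ" => Real.eulerMascheroniConstant

lemma phi_hasDerivAt (t : ℝ) :
    HasDerivAt (fun t : ℝ => Real.exp (-(t + γ))) (-Real.exp (-(t + γ))) t := by
  have h : HasDerivAt (fun t : ℝ => -(t + γ)) (-1) t := by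
    exact ((hasDerivAt_id t).add_const γ).neg
  simpa using h.exp

lemma subst_integral (g : ℝ → ℝ) :
    ∫ u in Ioi (0:ℝ), g u = ∫ t : ℝ, Real.exp (-(t + γ)) * g (Real.exp (-(t + γ))) := by
  have himg : (fun t : ℝ => Real.exp (-(t + γ))) '' univ = Ioi 0 := by
    rw [image_univ]
    have : (fun t : ℝ => Real.exp (-(t + γ))) = Real.exp ∘ (fun t : ℝ => -(t + γ)) := rfl
    rw [this, Set.range_comp]
    have : range (fun t : ℝ => -(t + γ)) = univ := by
      apply Set.range_eq_univ.2
      intro y; exact ⟨-y - γ, by ring⟩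
    rw [this, image_univ, Real.range_exp]
  have hinj : InjOn (fun t : ℝ => Real.exp (-(t + γ))) univ := by
    intro a _ b _ h
    have := Real.exp_injective h
    linarith [neg_injective this]
  have := integral_image_eq_integral_abs_deriv_smul (f' := fun t => -Real.exp (-(t + γ)))
    MeasurableSet.univ (fun x _ => (phi_hasDerivAt x).hasDerivWithinAt) hinj g
  rw [himg] at this
  rw [this, Measure.restrict_univ]
  congr 1; ext t
  rw [abs_neg, abs_of_pos (Real.exp_pos _), smul_eq_mul]

lemma subst_integrable (g : ℝ → ℝ) :
    IntegrableOn g (Ioi (0:ℝ)) ↔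
      Integrable (fun t : ℝ => Real.exp (-(t + γ)) * g (Real.exp (-(t + γ)))) := by
  have himg : (fun t : ℝ => Real.exp (-(t + γ))) '' univ = Ioi 0 := by
    rw [image_univ]
    have : (fun t : ℝ => Real.exp (-(t + γ))) = Real.exp ∘ (fun t : ℝ => -(t + γ)) := rfl
    rw [this, Set.range_comp]
    have : range (fun t : ℝ => -(t + γ)) = univ := by
      apply Set.range_eq_univ.2
      intro y; exact ⟨-y - γ, by ring⟩
    rw [this, image_univ, Real.range_exp]
  have hinj : InjOn (fun t : ℝ => Real.exp (-(t + γ))) univ := by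
    intro a _ b _ h
    have := Real.exp_injective h
    linarith [neg_injective this]
  have := integrableOn_image_iff_integrableOn_abs_deriv_smul (f' := fun t => -Real.exp (-(t + γ)))
    MeasurableSet.univ (fun x _ => (phi_hasDerivAt x).hasDerivWithinAt) hinj g
  rw [himg] at this
  rw [this]
  unfold IntegrableOn
  rw [Measure.restrict_univ]
  constructor <;> intro h <;> refine h.congr (Eventually.of_forall fun t => ?_) <;>
    simp [abs_of_pos (Real.exp_pos _), smul_eq_mul]

lemma integrableOn_log_mul_exp_neg :
    IntegrableOn (fun u : ℝ => Real.log u * Real.exp (-u)) (Ioi (0:ℝ)) := by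
  have h := (mellin_hasDerivAt_of_isBigO_rpow (a := 2) (b := 0) (s := 1)
    (f := fun t : ℝ => ((Real.exp (-t) : ℝ) : ℂ)) ?_ ?_ ?_ ?_ ?_).1
  · rw [MellinConvergent] at h
    have h2 : IntegrableOn (fun t : ℝ => ((Real.log t * Real.exp (-t) : ℝ) : ℂ)) (Ioi 0) := by
      refine h.congr_fun (fun t ht => ?_) measurableSet_Ioi
      rw [show (1:ℂ) - 1 = 0 by ring]
      simp [Complex.ofReal_mul, smul_eq_mul, Complex.cpow_zero]
    have h4 := h2.re
    refine h4.congr (Eventually.of_forall fun t => RCLike.ofReal_re _)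
  · refine (Continuous.continuousOn ?_).locallyIntegrableOn measurableSet_Ioi
    exact Complex.continuous_ofReal.comp (Real.continuous_exp.comp continuous_neg)
  · rw [← isBigO_norm_left]
    simp_rw [Complex.norm_real, isBigO_norm_left]
    simpa only [neg_one_mul] using (isLittleO_exp_neg_mul_rpow_atTop zero_lt_one _).isBigO
  · norm_num
  · simp_rw [neg_zero, Real.rpow_zero]
    refine isBigO_const_of_tendsto (?_ : Tendsto _ _ (𝓝 ((1:ℝ) : ℂ))) one_ne_zero
    rw [(by simp : ((1:ℝ) : ℂ) = ((Real.exp (-0) : ℝ) : ℂ))]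
    exact ((Complex.continuous_ofReal.comp
      (Real.continuous_exp.comp continuous_neg)).continuousAt).continuousWithinAt
  · norm_num

lemma integral_log_mul_exp_neg :
    ∫ u in Ioi (0:ℝ), Real.log u * Real.exp (-u) = -γ := by
  have hD := Complex.hasDerivAt_GammaIntegral (s := 1) (by norm_num)
  have hre := hD.real_of_complex
  have heq : (fun x : ℝ => (Complex.GammaIntegral x).re) =ᶠ[𝓝 (1:ℝ)] Real.Gamma := by
    filter_upwards [eventually_gt_nhds (by norm_num : (0:ℝ) < 1)] with x hx
    rw [← Complex.Gamma_eq_integral (by simpa using hx), Complex.Gamma_ofReal,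
      Complex.ofReal_re]
  have hre' : HasDerivAt Real.Gamma
      (∫ t : ℝ in Ioi 0, (t : ℂ) ^ ((1:ℂ) - 1) * (Real.log t * Real.exp (-t))).re 1 :=
    hre.congr_of_eventuallyEq heq.symm
  have huniq := hre'.unique Real.hasDerivAt_Gamma_one
  rw [← huniq]
  have h3 : (∫ t : ℝ in Ioi 0, (t : ℂ) ^ ((1:ℂ) - 1) * (Real.log t * Real.exp (-t)))
      = ((∫ u in Ioi (0:ℝ), Real.log u * Real.exp (-u) : ℝ) : ℂ) := by
    have h4 : (∫ t : ℝ in Ioi 0, (t : ℂ) ^ ((1:ℂ) - 1) * (Real.log t * Real.exp (-t)))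
        = ∫ t : ℝ in Ioi 0, ((Real.log t * Real.exp (-t) : ℝ) : ℂ) := by
      refine setIntegral_congr_fun measurableSet_Ioi (fun t ht => ?_)
      rw [show (1:ℂ) - 1 = 0 by ring, Complex.cpow_zero]
      simp [Complex.ofReal_mul]
    rw [h4]
    exact integral_ofReal
  rw [h3, Complex.ofReal_re]

lemma gumbelPDF_nonneg (t : ℝ) : 0 ≤ gumbelPDF t :=
  mul_nonneg (Real.exp_pos _).le (Real.exp_pos _).le

lemma gumbelPDF_continuous : Continuous gumbelPDF := by
  unfold gumbelPDF
  fun_prop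

lemma integrableOn_exp_neg_Ioi₀ : IntegrableOn (fun u : ℝ => Real.exp (-u)) (Ioi (0:ℝ)) := by
  have := exp_neg_integrableOn_Ioi (0:ℝ) (one_pos)
  simpa using this

lemma gumbelPDF_integrable : Integrable gumbelPDF := by
  have h := (subst_integrable (fun u => Real.exp (-u))).mp integrableOn_exp_neg_Ioi₀
  exact h.congr (Eventually.of_forall fun t => rfl)

lemma gumbelPDF_integral : ∫ t : ℝ, gumbelPDF t = 1 := by
  have h := subst_integral (fun u => Real.exp (-u))
  rw [integral_exp_neg_Ioi_zero] at h
  rw [show (1:ℝ) = ∫ t : ℝ, Real.exp (-(t + γ)) * Real.exp (-Real.exp (-(t + γ))) from h]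
  rfl

instance gumbel_prob : IsProbabilityMeasure gumbel := by
  constructor
  rw [gumbel, withDensity_apply _ MeasurableSet.univ, Measure.restrict_univ,
    ← ofReal_integral_eq_lintegral_ofReal gumbelPDF_integrable
      (Eventually.of_forall gumbelPDF_nonneg), gumbelPDF_integral]
  norm_num

lemma gumbelCDF_hasDerivAt (t : ℝ) :
    HasDerivAt (fun u : ℝ => Real.exp (-Real.exp (-(u + γ)))) (gumbelPDF t) t := by
  have h1 : HasDerivAt (fun u : ℝ => -(u + γ)) (-1) t := by
    exact ((hasDerivAt_id t).add_const γ).neg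
  have h2 := h1.exp
  have h3 := h2.neg
  have h4 := h3.exp
  simp only [mul_neg, mul_one, neg_neg] at h4
  convert h4 using 1
  · rfl
  simp only [gumbelPDF, Pi.neg_apply]; ring

lemma gumbel_Iic (a : ℝ) :
    gumbel (Iic a) = ENNReal.ofReal (Real.exp (-Real.exp (-(a + γ)))) := by
  rw [gumbel, withDensity_apply _ measurableSet_Iic,
    ← ofReal_integral_eq_lintegral_ofReal gumbelPDF_integrable.integrableOn
      (Eventually.of_forall gumbelPDF_nonneg)]
  congr 1
  have := integral_Iic_of_hasDerivAt_of_tendsto' (a := a) (m := 0)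
    (fun x _ => gumbelCDF_hasDerivAt x) gumbelPDF_integrable.integrableOn ?_
  · rw [this, sub_zero]
  · have l1 : Tendsto (fun u : ℝ => -(u + γ)) atBot atTop := by
      apply tendsto_neg_atBot_atTop.comp
      exact tendsto_atBot_add_const_right _ _ tendsto_id
    have l2 : Tendsto (fun u : ℝ => -Real.exp (-(u + γ))) atBot atBot :=
      (tendsto_neg_atTop_atBot.comp (Real.tendsto_exp_atTop.comp l1))
    exact Real.tendsto_exp_atBot.comp l2

lemma gumbel_integrable_id : Integrable (fun t : ℝ => t) gumbel := by
  rw [gumbel, integrable_withDensity_iff (show Measurable fun t => ENNReal.ofReal (gumbelPDF t) from ENNReal.measurable_ofReal.comp gumbelPDF_continuous.measurable) (Eventually.of_forall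
    fun t => ENNReal.ofReal_lt_top)]
  have h : IntegrableOn (fun u : ℝ => (-Real.log u - γ) * Real.exp (-u)) (Ioi (0:ℝ)) := by
    have h0 := (integrableOn_log_mul_exp_neg.neg).sub (integrableOn_exp_neg_Ioi₀.const_mul γ)
    exact h0.congr (Eventually.of_forall fun u => by
      simp only [Pi.sub_apply, Pi.neg_apply]; ring)
  have h2 := (subst_integrable _).mp h
  have key : ∀ t : ℝ, Real.exp (-(t + γ)) *
      ((-Real.log (Real.exp (-(t + γ))) - γ) * Real.exp (-Real.exp (-(t + γ))))
      = t * (ENNReal.ofReal (gumbelPDF t)).toReal := by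
    intro t
    rw [Real.log_exp, ENNReal.toReal_ofReal (gumbelPDF_nonneg t), gumbelPDF]
    ring
  exact h2.congr (Eventually.of_forall key)

lemma gumbel_integral_id : ∫ t : ℝ, t ∂gumbel = 0 := by
  rw [gumbel]
  have hrw : (fun t : ℝ => ENNReal.ofReal (gumbelPDF t))
      = fun t : ℝ => ((gumbelPDF t).toNNReal : ℝ≥0∞) := rfl
  rw [hrw, integral_withDensity_eq_integral_smul
    (by exact gumbelPDF_continuous.measurable.real_toNNReal) _]
  have h := subst_integral (fun u => (-Real.log u - γ) * Real.exp (-u))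
  have hL : ∫ u in Ioi (0:ℝ), (-Real.log u - γ) * Real.exp (-u) = 0 := by
    have : ∀ u : ℝ, (-Real.log u - γ) * Real.exp (-u)
        = -(Real.log u * Real.exp (-u)) - γ * Real.exp (-u) := fun u => by ring
    have i1 : IntegrableOn (fun u : ℝ => -(Real.log u * Real.exp (-u))) (Ioi (0:ℝ)) :=
      integrableOn_log_mul_exp_neg.neg
    have i2 : IntegrableOn (fun u : ℝ => γ * Real.exp (-u)) (Ioi (0:ℝ)) :=
      integrableOn_exp_neg_Ioi₀.const_mul γ
    rw [setIntegral_congr_fun measurableSet_Ioi (fun u _ => this u),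
      integral_sub i1 i2, integral_neg, integral_log_mul_exp_neg, integral_const_mul,
      integral_exp_neg_Ioi_zero]
    ring
  refine Eq.trans (integral_congr_ae ?_) (h.symm.trans hL)
  filter_upwards with t
  rw [Real.log_exp, NNReal.smul_def, smul_eq_mul, Real.coe_toNNReal _ (gumbelPDF_nonneg t),
    gumbelPDF]
  ring

lemma gumbel_integral_add (r : ℝ) : ∫ t : ℝ, (t + r) ∂gumbel = r := by
  rw [integral_add gumbel_integrable_id (integrable_const r), gumbel_integral_id,
    integral_const]
  simp

lemma gumbel_max_trick {A : Type} [Fintype A] [Nonempty A] (f : A → ℝ) :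
    (∫ g : A → ℝ, Finset.univ.sup' Finset.univ_nonempty (fun a => f a + g a)
        ∂(Measure.pi fun _ : A => gumbel))
      = Real.log (∑ a : A, Real.exp (f a)) := by
  set S : ℝ := ∑ a : A, Real.exp (f a) with hSdef
  have hS : 0 < S := Finset.sum_pos (fun a _ => Real.exp_pos _) Finset.univ_nonempty
  set M : (A → ℝ) → ℝ := fun g => Finset.univ.sup' Finset.univ_nonempty (fun a => f a + g a)
    with hMdef
  have hMmeas : Measurable M := by
    have h0 : Measurable (Finset.univ.sup' Finset.univ_nonempty
        (fun (a : A) (g : A → ℝ) => f a + g a)) :=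
      Finset.measurable_sup' Finset.univ_nonempty
        (fun a _ => (measurable_pi_apply a : Measurable fun g : A → ℝ => g a).const_add (f a))
    have he : M = Finset.univ.sup' Finset.univ_nonempty
        (fun (a : A) (g : A → ℝ) => f a + g a) := by
      funext g
      rw [hMdef, Finset.sup'_apply]
    rw [he]
    exact h0
  have hshift : Measurable (fun t : ℝ => t + Real.log S) := measurable_id.add_const _
  have hmap : Measure.map M (Measure.pi fun _ : A => gumbel)
      = Measure.map (fun t : ℝ => t + Real.log S) gumbel := by
    haveI : IsProbabilityMeasure (Measure.map M (Measure.pi fun _ : A => gumbel)) :=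
      Measure.isProbabilityMeasure_map hMmeas.aemeasurable
    refine Measure.ext_of_Iic _ _ (fun a => ?_)
    rw [Measure.map_apply hMmeas measurableSet_Iic,
      Measure.map_apply hshift measurableSet_Iic]
    have hpre : M ⁻¹' (Iic a) = Set.pi univ (fun i : A => Iic (a - f i)) := by
      ext g
      simp only [mem_preimage, mem_Iic, Set.mem_pi, mem_univ, forall_true_left, hMdef,
        Finset.sup'_le_iff, Finset.mem_univ, forall_true_left]
      constructor
      · intro h i; have := h i; linarith
      · intro h i; have := h i; linarith
    have hpre2 : (fun t : ℝ => t + Real.log S) ⁻¹' (Iic a) = Iic (a - Real.log S) := by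
      ext t; simp only [mem_preimage, mem_Iic]; constructor <;> intro <;> linarith
    rw [hpre, hpre2, Measure.pi_pi, gumbel_Iic]
    simp_rw [gumbel_Iic]
    rw [← ENNReal.ofReal_prod_of_nonneg (fun i _ => (Real.exp_pos _).le)]
    congr 1
    rw [← Real.exp_sum]
    congr 1
    have hr : ∀ i : A, -Real.exp (-(a - f i + γ)) = -(Real.exp (-(a + γ)) * Real.exp (f i)) := by
      intro i; rw [← Real.exp_add]; ring_nf
    calc ∑ i : A, -Real.exp (-(a - f i + γ))
        = ∑ i : A, -(Real.exp (-(a + γ)) * Real.exp (f i)) :=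
          Finset.sum_congr rfl fun i _ => hr i
      _ = -(Real.exp (-(a + γ)) * S) := by
          rw [hSdef, Finset.mul_sum, ← Finset.sum_neg_distrib]
      _ = -Real.exp (-(a - Real.log S + γ)) := by
          rw [show -(a - Real.log S + γ) = -(a + γ) + Real.log S by ring, Real.exp_add,
            Real.exp_log hS]
  have h1 : (∫ g : A → ℝ, M g ∂(Measure.pi fun _ : A => gumbel))
      = ∫ t : ℝ, t ∂(Measure.map M (Measure.pi fun _ : A => gumbel)) := by
    rw [integral_map (f := fun t : ℝ => t) hMmeas.aemeasurable
      measurable_id.aestronglyMeasurable]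
  rw [h1, hmap, integral_map (f := fun t : ℝ => t) hshift.aemeasurable
    measurable_id.aestronglyMeasurable]
  simpa using gumbel_integral_add (Real.log S)

/-- Alternating expectation-maximization identity for the log-partition function:
`log Z = E_{γ₁} max_{x₁} ⋯ E_{γₙ} max_{xₙ} {θ(x) + Σᵢ γᵢ(xᵢ)}`, expressed via
the inside-out recursion `Φ j x = E_{γ_{j+1}} max_{x_{j+1}} {Φ (j+1) (x with x_{j+1}) + γ_{j+1}(x_{j+1})}`
with `Φ n = θ`, so that `Φ 0 = log Z`. -/
theorem stmt_3 {n : ℕ} {X : Fin n → Type} [∀ i, Fintype (X i)] [∀ i, Nonempty (X i)]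
    (θ : (∀ i, X i) → ℝ) (Φ : ℕ → (∀ i, X i) → ℝ)
    (hΦn : Φ n = θ)
    (hΦ : ∀ j : Fin n, ∀ x : ∀ i, X i,
      Φ j x = ∫ g : X j → ℝ,
          (Finset.univ.sup' Finset.univ_nonempty fun a : X j =>
            Φ ((j : ℕ) + 1) (Function.update x j a) + g a)
        ∂(Measure.pi fun _ : X j => gumbel)) :
    ∀ x : ∀ i, X i,
      Φ 0 x = Real.log (∑ y : ∀ i, X i, Real.exp (θ y)) := by
  classical
  -- agree j x : the finset of y agreeing with x on coordinates < j
  set F : ℕ → (∀ i, X i) → Finset (∀ i, X i) := fun j x =>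
    Finset.univ.filter (fun y => ∀ i : Fin n, (i : ℕ) < j → y i = x i) with hF
  have key : ∀ d : ℕ, ∀ x : ∀ i, X i,
      Φ (n - d) x = Real.log (∑ y ∈ F (n - d) x, Real.exp (θ y)) := by
    intro d
    induction d with
    | zero =>
      intro x
      have hFx : F (n - 0) x = {x} := by
        ext y
        simp only [hF, Finset.mem_filter, Finset.mem_univ, true_and, Finset.mem_singleton,
          Nat.sub_zero]
        constructor
        · intro h; funext i; exact h i i.isLt
        · rintro rfl; intro i _; rfl
      rw [hFx, Finset.sum_singleton, Real.log_exp, Nat.sub_zero, hΦn]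
    | succ d ih =>
      intro x
      rcases le_or_gt n d with hnd | hdn
      · -- n - (d+1) = n - d, statement unchanged
        have : n - (d + 1) = n - d := by omega
        rw [this]; exact ih x
      · -- j := n - (d+1) < n
        set j : ℕ := n - (d + 1) with hj
        have hjn : j < n := by omega
        have hj1 : j + 1 = n - d := by omega
        set jF : Fin n := ⟨j, hjn⟩ with hjF
        have hstep := hΦ jF x
        have hcoe : ((jF : ℕ)) = j := rfl
        rw [hcoe] at hstep
        rw [show Φ (n - (d + 1)) x = Φ j x from rfl, hstep,
          gumbel_max_trick (fun a : X jF => Φ (j + 1) (Function.update x jF a))]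
        congr 1
        -- ∑ a, exp (Φ (j+1) (update x jF a)) = ∑ y in F j x, exp (θ y)
        have hsum : ∀ a : X jF, Real.exp (Φ (j + 1) (Function.update x jF a))
            = ∑ y ∈ F (j + 1) (Function.update x jF a), Real.exp (θ y) := by
          intro a
          rw [hj1, ih (Function.update x jF a), ← hj1, Real.exp_log]
          apply Finset.sum_pos (fun y _ => Real.exp_pos _)
          refine ⟨Function.update x jF a, ?_⟩
          simp [hF]
        rw [Finset.sum_congr rfl fun a _ => hsum a]
        -- now partition F j x by the value of y jF
        have hpart : ∀ a : X jF, F (j + 1) (Function.update x jF a)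
            = (F j x).filter (fun y => y jF = a) := by
          intro a
          ext y
          simp only [hF, Finset.mem_filter, Finset.mem_univ, true_and]
          constructor
          · intro h
            refine ⟨fun i hi => ?_, ?_⟩
            · have h2 := h i (by omega)
              rwa [Function.update_of_ne (by
                intro he; rw [he] at hi; simp only [hjF] at hi; omega) a x] at h2
            · have h2 := h jF (by simp [hjF])
              rwa [Function.update_self] at h2
          · rintro ⟨h1, h2⟩ i hi
            rcases Nat.lt_succ_iff_lt_or_eq.mp hi with hlt | heq
            · rw [Function.update_of_ne (by
                intro he; rw [he] at hlt; simp only [hjF] at hlt; omega) a x]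
              exact h1 i hlt
            · have : i = jF := by
                apply Fin.ext; simp [hjF, heq]
              rw [this, Function.update_self]
              exact h2
        rw [Finset.sum_congr rfl fun a _ => by rw [hpart a]]
        exact Finset.sum_fiberwise (F j x) (fun y => y jF) (fun y => Real.exp (θ y))
  intro x
  have h0 := key n x
  rw [Nat.sub_self] at h0
  rw [h0]
  congr 1
  have : F 0 x = Finset.univ := by
    ext y
    simp only [hF, Finset.mem_filter, Finset.mem_univ, true_and, iff_true]
    intro i hi; omega
  rw [this]
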